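/- arXiv:1108.0726 — 3 statements merged into one kernel-verified Lean document; each statement's English description precedes it below -/
import Mathlib

section
/- For i.i.d. Bernoulli(p) bond percolation on a finite graph, the expected number of open clusters E_p[M] is a polynomial in p whose derivative satisfies d/dp E_p[M] = − Σ_{b ∈ E} P_p(G(b)), where G(b) is the event that the endpoints of b are not connected by an open path avoiding b. -/
open MeasureTheory ENNReal

/-- The graph of open edges. -/
def openGraph {V E : Type*} (ends : E → V × V) (ω : E → Bool) : SimpleGraph V :=
  SimpleGraph.fromRel (fun x y => ∃ e, ω e = true ∧ ends e = (x, y))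

/-- The number of open clusters. -/
noncomputable def clusterCount (V : Type*) {E : Type*} (ends : E → V × V) (ω : E → Bool) : ℕ :=
  Nat.card (openGraph ends ω).ConnectedComponent

/-- The Bernoulli(p) weight of a configuration: p^{#open} (1-p)^{#closed}. -/
def wt {E : Type*} [Fintype E] (p : ℝ) (ω : E → Bool) : ℝ :=
  ∏ e, if ω e then p else 1 - p

/-- The probability of a set of configurations under i.i.d. Bernoulli(p) edge states. -/
noncomputable def pr {E : Type*} [Fintype E] [DecidableEq E] (p : ℝ) (A : Set (E → Bool)) : ℝ :=
  ∑ ω : E → Bool, A.indicator (wt p) ω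

/-- The expectation of a real random variable under i.i.d. Bernoulli(p) edge states. -/
noncomputable def expct {E : Type*} [Fintype E] [DecidableEq E] (p : ℝ) (f : (E → Bool) → ℝ) : ℝ :=
  ∑ ω : E → Bool, wt p ω * f ω

open SimpleGraph
section Graph
variable {V : Type*}

/-- Reachability in `G ⊔` a single edge `{x,y}`. -/
lemma reach_sup_edge (G : SimpleGraph V) (x y u v : V) :
    (G ⊔ SimpleGraph.fromRel (fun a c => (x, y) = (a, c))).Reachable u v ↔
      G.Reachable u v ∨ (G.Reachable u x ∧ G.Reachable y v) ∨
        (G.Reachable u y ∧ G.Reachable x v) := by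
  set H := SimpleGraph.fromRel (fun a c => (x, y) = (a, c)) with hH
  constructor
  · rw [reachable_iff_reflTransGen]
    intro h
    induction h with
    | refl => exact Or.inl (Reachable.refl u)
    | tail _ hadj ih =>
      rename_i v' w _
      rcases hadj with hG | hE
      · have hr : G.Reachable v' w := hG.reachable
        rcases ih with h1 | ⟨h1, h2⟩ | ⟨h1, h2⟩
        · exact Or.inl (h1.trans hr)
        · exact Or.inr (Or.inl ⟨h1, h2.trans hr⟩)
        · exact Or.inr (Or.inr ⟨h1, h2.trans hr⟩)
      · rw [hH, SimpleGraph.fromRel_adj] at hE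
        obtain ⟨hne, hc | hc⟩ := hE
        · obtain ⟨rfl, rfl⟩ := Prod.mk.injEq .. ▸ Prod.ext_iff.mp hc.symm
          rcases ih with h1 | ⟨h1, h2⟩ | ⟨h1, h2⟩
          · exact Or.inr (Or.inl ⟨h1, Reachable.refl _⟩)
          · exact Or.inr (Or.inl ⟨h1, Reachable.refl _⟩)
          · exact Or.inl h1
        · obtain ⟨rfl, rfl⟩ := Prod.mk.injEq .. ▸ Prod.ext_iff.mp hc.symm
          rcases ih with h1 | ⟨h1, h2⟩ | ⟨h1, h2⟩
          · exact Or.inr (Or.inr ⟨h1, Reachable.refl _⟩)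
          · exact Or.inl h1
          · exact Or.inl (h1.trans h2.symm)
  · have hle : G ≤ G ⊔ H := le_sup_left
    have hxy : (G ⊔ H).Reachable x y := by
      by_cases hne : x = y
      · exact hne ▸ Reachable.refl x
      · exact (SimpleGraph.Adj.reachable (by
          exact Or.inr (by rw [hH, SimpleGraph.fromRel_adj]; exact ⟨hne, Or.inl rfl⟩)))
    rintro (h | ⟨h1, h2⟩ | ⟨h1, h2⟩)
    · exact h.mono hle
    · exact ((h1.mono hle).trans hxy).trans (h2.mono hle)
    · exact ((h1.mono hle).trans hxy.symm).trans (h2.mono hle)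
end Graph

section Count
variable {V : Type*} [Finite V]

lemma card_cc_of_reach {G G' : SimpleGraph V} {x y : V} (hle : G ≤ G')
    (hreach : ∀ u v, G'.Reachable u v ↔ G.Reachable u v ∨
      (G.Reachable u x ∧ G.Reachable y v) ∨ (G.Reachable u y ∧ G.Reachable x v))
    (hxy : G.Reachable x y) :
    Nat.card G.ConnectedComponent = Nat.card G'.ConnectedComponent := by
  apply Nat.card_eq_of_bijective (ConnectedComponent.map (SimpleGraph.Hom.ofLE hle))
  constructor
  · refine ConnectedComponent.ind₂ (fun u v h => ?_)
    rw [ConnectedComponent.map_mk, ConnectedComponent.map_mk] at h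
    have h' : G'.Reachable u v := ConnectedComponent.exact h
    rcases (hreach u v).mp h' with h1 | ⟨h1, h2⟩ | ⟨h1, h2⟩
    · exact ConnectedComponent.sound h1
    · exact ConnectedComponent.sound ((h1.trans hxy).trans h2)
    · exact ConnectedComponent.sound ((h1.trans hxy.symm).trans h2)
  · exact ConnectedComponent.ind (fun v => ⟨G.connectedComponentMk v, by
      rw [ConnectedComponent.map_mk]; rfl⟩)

lemma card_cc_of_not_reach {G G' : SimpleGraph V} {x y : V} (hle : G ≤ G')
    (hreach : ∀ u v, G'.Reachable u v ↔ G.Reachable u v ∨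
      (G.Reachable u x ∧ G.Reachable y v) ∨ (G.Reachable u y ∧ G.Reachable x v))
    (hxy : ¬ G.Reachable x y) :
    Nat.card G.ConnectedComponent = Nat.card G'.ConnectedComponent + 1 := by
  classical
  set cy := G.connectedComponentMk y with hcy
  set cx := G.connectedComponentMk x with hcx
  have hne : cx ≠ cy := fun h => hxy (ConnectedComponent.exact h)
  have key : G'.ConnectedComponent ≃ {C : G.ConnectedComponent // C ≠ cy} := by
    refine ⟨Quot.lift (fun v => ⟨if G.connectedComponentMk v = cy then cx
        else G.connectedComponentMk v, ?_⟩) ?_,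
      fun C => ConnectedComponent.map (SimpleGraph.Hom.ofLE hle) (C : G.ConnectedComponent),
      ?_, ?_⟩
    · split
      · exact hne
      · assumption
    · intro u v huv
      have h' : G'.Reachable u v := huv
      refine Subtype.ext ?_
      dsimp only
      rcases (hreach u v).mp h' with h1 | ⟨h1, h2⟩ | ⟨h1, h2⟩
      · rw [ConnectedComponent.sound h1]
      · have hu : G.connectedComponentMk u = cx := ConnectedComponent.sound h1
        have hv : G.connectedComponentMk v = cy := (ConnectedComponent.sound h2).symm
        rw [hu, hv, if_neg hne, if_pos rfl]
      · have hu : G.connectedComponentMk u = cy := ConnectedComponent.sound h1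
        have hv : G.connectedComponentMk v = cx := (ConnectedComponent.sound h2).symm
        rw [hu, hv, if_pos rfl]
        split <;> rfl
    · refine Quot.ind (fun v => ?_)
      simp only
      split
      · next h =>
        rw [hcx, ConnectedComponent.map_mk]
        have : G'.Reachable x v := (hreach x v).mpr
          (Or.inr (Or.inl ⟨Reachable.refl x, (ConnectedComponent.exact (hcy ▸ h)).symm⟩))
        exact ConnectedComponent.sound this
      · rw [ConnectedComponent.map_mk]; rfl
    · rintro ⟨C, hC⟩
      obtain ⟨v, rfl⟩ := Quot.exists_rep C
      refine Subtype.ext ?_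
      simp only [ConnectedComponent.map_mk]
      exact if_neg hC
  have h1 : Nat.card {C : G.ConnectedComponent // C = cy} = 1 := by
    simp [Nat.card_eq_fintype_card]
  calc Nat.card G.ConnectedComponent
      = Nat.card ({C : G.ConnectedComponent // C = cy} ⊕ {C : G.ConnectedComponent // ¬ C = cy}) :=
        (Nat.card_congr (Equiv.sumCompl _)).symm
    _ = 1 + Nat.card {C : G.ConnectedComponent // C ≠ cy} := by rw [Nat.card_sum, h1]
    _ = Nat.card G'.ConnectedComponent + 1 := by rw [Nat.card_congr key.symm]; ring

end Count

lemma openGraph_update_true {V E : Type*} [DecidableEq E] (ends : E → V × V)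
    (ω : E → Bool) (b : E) :
    openGraph ends (Function.update ω b true) =
      openGraph ends (Function.update ω b false) ⊔
        SimpleGraph.fromRel (fun a c => ((ends b).1, (ends b).2) = (a, c)) := by
  ext u v
  simp only [openGraph, SimpleGraph.fromRel_adj, SimpleGraph.sup_adj, Function.update_apply]
  constructor
  · rintro ⟨hne, ⟨e, he, hends⟩ | ⟨e, he, hends⟩⟩
    · by_cases heb : e = b
      · subst heb
        right
        exact ⟨hne, Or.inl (by rw [← hends])⟩
      · rw [if_neg heb] at he
        exact Or.inl ⟨hne, Or.inl ⟨e, by rw [if_neg heb]; exact he, hends⟩⟩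
    · by_cases heb : e = b
      · subst heb
        right
        exact ⟨hne, Or.inr (by rw [← hends])⟩
      · rw [if_neg heb] at he
        exact Or.inl ⟨hne, Or.inr ⟨e, by rw [if_neg heb]; exact he, hends⟩⟩
  · rintro (⟨hne, ⟨e, he, hends⟩ | ⟨e, he, hends⟩⟩ | ⟨hne, hc | hc⟩)
    · refine ⟨hne, Or.inl ⟨e, ?_, hends⟩⟩
      split at he
      · exact absurd he (by simp)
      · split
        · rfl
        · exact he
    · refine ⟨hne, Or.inr ⟨e, ?_, hends⟩⟩
      split at he
      · exact absurd he (by simp)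
      · split
        · rfl
        · exact he
    · exact ⟨hne, Or.inl ⟨b, by rw [if_pos rfl], by rw [← hc]⟩⟩
    · exact ⟨hne, Or.inr ⟨b, by rw [if_pos rfl], by rw [← hc]⟩⟩

open Classical in
lemma clusterCount_update {V E : Type*} [Finite V] [DecidableEq E] (ends : E → V × V)
    (ω : E → Bool) (b : E) :
    (clusterCount V ends (Function.update ω b true) : ℝ) =
      clusterCount V ends (Function.update ω b false) -
        (if (openGraph ends (Function.update ω b false)).Reachable (ends b).1 (ends b).2
          then 0 else 1) := by
  set G := openGraph ends (Function.update ω b false) with hG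
  set G' := openGraph ends (Function.update ω b true) with hG'
  have hsup : G' = G ⊔ SimpleGraph.fromRel
      (fun a c => ((ends b).1, (ends b).2) = (a, c)) := openGraph_update_true ends ω b
  have hle : G ≤ G' := hsup ▸ le_sup_left
  have hreach : ∀ u v, G'.Reachable u v ↔ G.Reachable u v ∨
      (G.Reachable u (ends b).1 ∧ G.Reachable (ends b).2 v) ∨
      (G.Reachable u (ends b).2 ∧ G.Reachable (ends b).1 v) := by
    intro u v
    rw [hsup]
    exact reach_sup_edge G (ends b).1 (ends b).2 u v
  by_cases h : G.Reachable (ends b).1 (ends b).2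
  · rw [if_pos h, clusterCount, clusterCount, ← hG, ← hG',
      card_cc_of_reach hle hreach h]
    ring
  · rw [if_neg h, clusterCount, clusterCount, ← hG, ← hG',
      card_cc_of_not_reach hle hreach h]
    push_cast
    ring

/-- The expected number of open clusters, as a polynomial function of p, has derivative
−Σ_b P_p(G(b)), where G(b) is the event that the endpoints of b are not connected by an
open path avoiding b. -/
theorem stmt_8 {V E : Type*} [Finite V] [Fintype E] [DecidableEq E]
    (ends : E → V × V) (p : ℝ) :
    HasDerivAt (fun q => expct q (fun ω => (clusterCount V ends ω : ℝ)))
      (-∑ b : E, pr p {ω | ¬ (openGraph ends (Function.update ω b false)).Reachable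
          (ends b).1 (ends b).2}) p := by
  classical
  set c : (E → Bool) → ℝ := fun ω => (clusterCount V ends ω : ℝ) with hc
  set W : E → (E → Bool) → ℝ :=
    fun b ω => ∏ e ∈ Finset.univ.erase b, (if ω e then p else 1 - p) with hW
  set s : E → (E → Bool) → ℝ := fun b ω => if ω b then 1 else -1 with hs
  set D : (E → Bool) → ℝ := fun ω => ∑ b, W b ω * s b ω with hD
  have hwt : ∀ ω : E → Bool, HasDerivAt (fun q => wt q ω) (D ω) p := by
    intro ω
    have h := HasDerivAt.fun_finsetProd (u := Finset.univ)
      (f := fun e q => if ω e then q else 1 - q)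
      (f' := fun e => if ω e then (1:ℝ) else -1) (x := p) ?_
    · simp only [smul_eq_mul] at h; exact h
    · intro i _
      by_cases h : ω i = true
      · simp only [h, if_true]
        exact hasDerivAt_id p
      · simp only [h, if_false]
        simpa using (hasDerivAt_id p).const_sub 1
  have hderiv : HasDerivAt (fun q => expct q c) (∑ ω : E → Bool, D ω * c ω) p :=
    HasDerivAt.fun_sum (fun ω _ => (hwt ω).mul_const (c ω))
  suffices hsum : ∑ ω : E → Bool, D ω * c ω =
      -∑ b : E, pr p {ω | ¬ (openGraph ends (Function.update ω b false)).Reachable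
          (ends b).1 (ends b).2} by
    rw [hsum] at hderiv
    exact hderiv
  have hswap : ∑ ω : E → Bool, D ω * c ω = ∑ b : E, ∑ ω : E → Bool, W b ω * s b ω * c ω := by
    rw [Finset.sum_comm]
    refine Finset.sum_congr rfl fun ω _ => ?_
    rw [hD, Finset.sum_mul]
  rw [hswap, ← Finset.sum_neg_distrib]
  refine Finset.sum_congr rfl fun b _ => ?_
  -- per-edge identity
  set A : Set (E → Bool) := {ω | ¬ (openGraph ends (Function.update ω b false)).Reachable
      (ends b).1 (ends b).2} with hA
  set flip : (E → Bool) → (E → Bool) := fun ω => Function.update ω b (!ω b) with hflip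
  have hinv : Function.Involutive flip := by
    intro ω
    funext e
    by_cases h : e = b
    · subst h; simp [hflip]
    · simp [hflip, Function.update_apply, h]
  set σ : Equiv.Perm (E → Bool) := hinv.toPerm flip with hσ
  have hWflip : ∀ ω, W b (flip ω) = W b ω := by
    intro ω
    refine Finset.prod_congr rfl fun e he => ?_
    have : e ≠ b := Finset.ne_of_mem_erase he
    simp [hflip, Function.update_apply, this]
  have hupd : ∀ ω : E → Bool, Function.update (flip ω) b false = Function.update ω b false := by
    intro ω
    funext e
    by_cases h : e = b
    · subst h; simp
    · simp [hflip, Function.update_apply, h]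
  set T : (E → Bool) → ℝ := fun ω => W b ω * s b ω * c ω with hT
  set I : (E → Bool) → ℝ := fun ω => A.indicator (wt p) ω with hI
  have point : ∀ ω, T ω + T (flip ω) = -(I ω + I (flip ω)) := by
    intro ω
    have hmem : flip ω ∈ A ↔ ω ∈ A := by
      simp only [hA, Set.mem_setOf_eq, hupd ω]
    have hcc : (clusterCount V ends (Function.update ω b true) : ℝ) =
        clusterCount V ends (Function.update ω b false) -
          (if (openGraph ends (Function.update ω b false)).Reachable (ends b).1 (ends b).2
            then 0 else 1) := clusterCount_update ends ω b
    have hwtsum : wt p ω + wt p (flip ω) = W b ω := by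
      have h1 : wt p ω = W b ω * (if ω b then p else 1 - p) := by
        rw [hW, wt]
        exact (Finset.prod_erase_mul Finset.univ _ (Finset.mem_univ b)).symm
      have h2 : wt p (flip ω) = W b ω * (if (flip ω) b then p else 1 - p) := by
        rw [← hWflip ω, hW, wt]
        exact (Finset.prod_erase_mul Finset.univ _ (Finset.mem_univ b)).symm
      have h3 : (flip ω) b = !ω b := by simp [hflip]
      rw [h1, h2, h3]
      cases hb : ω b <;> simp <;> ring
    have hindsum : I ω + I (flip ω) = W b ω *
        (if (openGraph ends (Function.update ω b false)).Reachable (ends b).1 (ends b).2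
          then 0 else 1) := by
      by_cases hm : ω ∈ A
      · have hm' : flip ω ∈ A := hmem.mpr hm
        rw [hI]
        simp only [Set.indicator_of_mem hm, Set.indicator_of_mem hm']
        rw [if_neg (by exact hm), hwtsum, mul_one]
      · have hm' : flip ω ∉ A := fun h => hm (hmem.mp h)
        rw [hI]
        simp only [Set.indicator_of_notMem hm, Set.indicator_of_notMem hm']
        rw [if_pos (by simpa [hA, Set.mem_setOf_eq, not_not] using hm)]
        ring
    have hTsum : T ω + T (flip ω) = W b ω * (s b ω * (c ω - c (flip ω))) := by
      rw [hT]
      simp only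
      rw [hWflip ω]
      have h3 : s b (flip ω) = - s b ω := by
        have : (flip ω) b = !ω b := by simp [hflip]
        rw [hs]; simp only [this]
        cases hb : ω b <;> simp
      rw [h3]
      ring
    rw [hTsum, hindsum]
    have hdiff : s b ω * (c ω - c (flip ω)) =
        -(if (openGraph ends (Function.update ω b false)).Reachable (ends b).1 (ends b).2
          then 0 else 1) := by
      cases hb : ω b
      · have hω : Function.update ω b false = ω := by
          rw [← hb]; exact Function.update_eq_self b ω
        have hflipω : flip ω = Function.update ω b true := by
          rw [hflip]; simp only [hb, Bool.not_false]
        rw [hs]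
        simp only [hb, Bool.false_eq_true, if_false]
        rw [hc]
        simp only
        rw [hflipω, hcc, hω]
        ring
      · have hω : Function.update ω b true = ω := by
          rw [← hb]; exact Function.update_eq_self b ω
        have hflipω : flip ω = Function.update ω b false := by
          rw [hflip]; simp only [hb, Bool.not_true]
        rw [hs]
        simp only [hb, if_true]
        rw [hc]
        simp only
        rw [hflipω, ← hω, hcc, hω]
        ring
    rw [hdiff]
    ring
  have hTflip : ∑ ω : E → Bool, T (flip ω) = ∑ ω : E → Bool, T ω := by
    exact Equiv.sum_comp σ T
  have hIflip : ∑ ω : E → Bool, I (flip ω) = ∑ ω : E → Bool, I ω := by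
    exact Equiv.sum_comp σ I
  have h2 : (2:ℝ) * ∑ ω : E → Bool, T ω = -(2 * ∑ ω : E → Bool, I ω) := by
    have e1 : ∑ ω : E → Bool, (T ω + T (flip ω)) =
        ∑ ω : E → Bool, -(I ω + I (flip ω)) := Finset.sum_congr rfl fun ω _ => point ω
    rw [Finset.sum_add_distrib, hTflip] at e1
    rw [Finset.sum_neg_distrib, Finset.sum_add_distrib, hIflip] at e1
    linarith
  have : ∑ ω : E → Bool, T ω = -∑ ω : E → Bool, I ω := by linarith
  rw [pr]
  exact this
end

section
/- Fix n > m and a bond b with both endpoints in B(m) ⊂ Z^d. If the endpoints of b are not connected by an open path avoiding b within the box B(n), but are connected by an open path avoiding b in the full lattice, then there exist two disjoint open paths from the two endpoints of b each reaching the boundary of the box v_1(b) + B(n − m − 1). -/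
open MeasureTheory ENNReal Filter


/-- The open subgraph of the Z^d lattice determined by a configuration
`ω : Sym2 (Fin d → ℤ) → Bool` (`true` = open): `x ~ y` iff they are at ℓ¹-distance 1
and the bond between them is open. -/
def openLattice (d : ℕ) (ω : Sym2 (Fin d → ℤ) → Bool) : SimpleGraph (Fin d → ℤ) :=
  SimpleGraph.fromRel (fun x y => (∑ i, |x i - y i|) = 1 ∧ ω s(x, y) = true)

/-- The open subgraph of the lattice using only bonds with both endpoints in the box
B(n) = [-n,n]^d. -/
def openLatticeBox (d n : ℕ) (ω : Sym2 (Fin d → ℤ) → Bool) : SimpleGraph (Fin d → ℤ) :=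
  SimpleGraph.fromRel (fun x y => (∑ i, |x i - y i|) = 1 ∧ ω s(x, y) = true
    ∧ (∀ i, |x i| ≤ (n : ℤ)) ∧ (∀ i, |y i| ≤ (n : ℤ)))

/-- G_n(b) for the bond b = {u,v}: the event that u and v are not joined by an open path
avoiding b inside B(n). -/
def GboxEvent (d n : ℕ) (u v : Fin d → ℤ) : Set (Sym2 (Fin d → ℤ) → Bool) :=
  {ω | ¬ (openLatticeBox d n (Function.update ω s(u, v) false)).Reachable u v}

/-- G(b) for the bond b = {u,v}: the event that u and v are not joined by an open path
avoiding b in all of Z^d. -/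
def GfullEvent (d : ℕ) (u v : Fin d → ℤ) : Set (Sym2 (Fin d → ℤ) → Bool) :=
  {ω | ¬ (openLattice d (Function.update ω s(u, v) false)).Reachable u v}

/- ### Auxiliary lemmas -/

/-- A discrete intermediate value theorem along a walk, producing the initial segment
up to the first vertex where the value `r` is attained. -/
lemma prefix_ivt {V : Type*} {G : SimpleGraph V} {f : V → ℤ}
    (hf : ∀ x y, G.Adj x y → f y ≤ f x + 1) {r : ℤ} :
    ∀ {a b : V} (w : G.Walk a b), f a ≤ r → r ≤ f b →
    ∃ (x : V) (w₁ : G.Walk a x) (w₂ : G.Walk x b),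
      f x = r ∧ (∀ z ∈ w₁.support, f z ≤ r) ∧ w = w₁.append w₂ := by
  intro a b w
  induction w with
  | nil =>
    intro h1 h2
    exact ⟨_, .nil, .nil, le_antisymm h1 h2, by simpa using h1, rfl⟩
  | @cons a c b h p ih =>
    intro h1 h2
    by_cases hr : f a = r
    · exact ⟨a, .nil, .cons h p, hr, by simpa using h1, rfl⟩
    · have hc : f c ≤ r := by
        have := hf a c h
        omega
      obtain ⟨x, w₁, w₂, hfx, hsup, hsplit⟩ := ih hc h2
      refine ⟨x, .cons h w₁, w₂, hfx, ?_, by rw [hsplit]; rfl⟩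
      intro z hz
      rcases List.mem_cons.1 hz with rfl | hz
      · exact h1
      · exact hsup z hz

lemma adj_sum_one {d : ℕ} {ω : Sym2 (Fin d → ℤ) → Bool} {x y : Fin d → ℤ}
    (h : (openLattice d ω).Adj x y) : (∑ i, |x i - y i|) = 1 := by
  rw [openLattice, SimpleGraph.fromRel_adj] at h
  rcases h.2 with ⟨h1, _⟩ | ⟨h1, _⟩
  · exact h1
  · simpa [abs_sub_comm] using h1

lemma adj_coord_le {d : ℕ} {ω : Sym2 (Fin d → ℤ) → Bool} {x y : Fin d → ℤ}
    (h : (openLattice d ω).Adj x y) (i : Fin d) : |x i - y i| ≤ 1 := by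
  have := adj_sum_one h
  calc |x i - y i| ≤ ∑ j, |x j - y j| :=
        Finset.single_le_sum (f := fun j => |x j - y j|) (fun j _ => abs_nonneg _) (Finset.mem_univ i)
    _ = 1 := this

/-- A walk in the open lattice all of whose vertices lie in B(n) gives reachability in the
box graph. -/
lemma walk_in_box {d n : ℕ} {ω : Sym2 (Fin d → ℤ) → Bool} :
    ∀ {a b : Fin d → ℤ} (w : (openLattice d ω).Walk a b),
      (∀ z ∈ w.support, ∀ i, |z i| ≤ (n : ℤ)) → (openLatticeBox d n ω).Reachable a b := by
  intro a b w
  induction w with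
  | nil => intro _; exact SimpleGraph.Reachable.refl _
  | @cons a c b h p ih =>
    intro hs
    have ha : ∀ i, |a i| ≤ (n : ℤ) := hs a (by simp)
    have hc : ∀ i, |c i| ≤ (n : ℤ) := hs c (by simp)
    have hadj : (openLatticeBox d n ω).Adj a c := by
      rw [openLattice, SimpleGraph.fromRel_adj] at h
      rw [openLatticeBox, SimpleGraph.fromRel_adj]
      refine ⟨h.1, ?_⟩
      rcases h.2 with ⟨h1, h2⟩ | ⟨h1, h2⟩
      · exact Or.inl ⟨h1, h2, ha, hc⟩
      · exact Or.inr ⟨h1, h2, hc, ha⟩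
    exact hadj.reachable.trans (ih fun z hz => hs z (by simp [hz]))

lemma openLattice_mono {d : ℕ} {ω₁ ω₂ : Sym2 (Fin d → ℤ) → Bool}
    (h : ∀ e, ω₁ e = true → ω₂ e = true) : openLattice d ω₁ ≤ openLattice d ω₂ := by
  intro x y hxy
  rw [openLattice, SimpleGraph.fromRel_adj] at hxy ⊢
  refine ⟨hxy.1, ?_⟩
  rcases hxy.2 with ⟨h1, h2⟩ | ⟨h1, h2⟩
  · exact Or.inl ⟨h1, h _ h2⟩
  · exact Or.inr ⟨h1, h _ h2⟩

/-- If the endpoints u, v of a bond b lying in B(m) are not joined by an open path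
avoiding b inside B(n) (n > m), but are joined by an open path avoiding b in the full
lattice, then there are two open paths, from u and from v, vertex-disjoint except possibly
at u and v, each reaching the boundary of the box u + B(n−m−1). -/
theorem stmt_11 {d m n : ℕ} (hmn : m < n) (ω : Sym2 (Fin d → ℤ) → Bool)
    (u v : Fin d → ℤ) (hbond : (∑ i, |u i - v i|) = 1)
    (hu : ∀ i, |u i| ≤ (m : ℤ)) (hv : ∀ i, |v i| ≤ (m : ℤ))
    (hGn : ω ∈ GboxEvent d n u v) (hG : ω ∉ GfullEvent d u v) :
    ∃ (x y : Fin d → ℤ) (w₁ : (openLattice d ω).Walk u x) (w₂ : (openLattice d ω).Walk v y),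
      w₁.IsPath ∧ w₂.IsPath ∧
      (∀ z ∈ w₁.support, z ∈ w₂.support → z = u ∨ z = v) ∧
      ((∀ i, |x i - u i| ≤ ((n - m - 1 : ℕ) : ℤ)) ∧ ∃ i, |x i - u i| = ((n - m - 1 : ℕ) : ℤ)) ∧
      ((∀ i, |y i - u i| ≤ ((n - m - 1 : ℕ) : ℤ)) ∧ ∃ i, |y i - u i| = ((n - m - 1 : ℕ) : ℤ)) := by
  classical
  haveI hd : Nonempty (Fin d) := by
    by_contra hns
    rw [not_nonempty_iff] at hns
    rw [Finset.univ_eq_empty, Finset.sum_empty] at hbond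
    exact absurd hbond (by norm_num)
  rw [GboxEvent, Set.mem_setOf_eq] at hGn
  rw [GfullEvent, Set.mem_setOf_eq, not_not] at hG
  set ω' := Function.update ω s(u, v) false with hω'
  have hle : openLattice d ω' ≤ openLattice d ω := by
    apply openLattice_mono
    intro e he
    rcases eq_or_ne e s(u, v) with rfl | hne
    · simp [hω', Function.update_self] at he
    · rwa [hω', Function.update_of_ne hne] at he
  obtain ⟨p0⟩ := hG
  obtain ⟨p, hpath⟩ := p0.toPath
  have hout : ∃ o ∈ p.support, ∃ i, (n : ℤ) < |o i| := by
    by_contra hcon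
    push_neg at hcon
    exact hGn (walk_in_box p (fun z hz i => hcon z hz i))
  obtain ⟨o, ho, i₀, hi₀⟩ := hout
  have hne0 : (Finset.univ : Finset (Fin d)).Nonempty := Finset.univ_nonempty
  set f : (Fin d → ℤ) → ℤ := fun z => Finset.univ.sup' hne0 (fun i => |z i - u i|) with hfdef
  have hf_le : ∀ z r, (∀ i, |z i - u i| ≤ r) → f z ≤ r :=
    fun z r h => Finset.sup'_le _ _ (fun i _ => h i)
  have hf_ge : ∀ z i, |z i - u i| ≤ f z := by
    intro z i
    rw [hfdef]
    exact Finset.le_sup' (fun j => |z j - u j|) (Finset.mem_univ i)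
  have hstep : ∀ x y, (openLattice d ω').Adj x y → f y ≤ f x + 1 := by
    intro x y hxy
    apply hf_le
    intro i
    have h1 := adj_coord_le hxy i
    have h2 := hf_ge x i
    have h3 : |y i - u i| ≤ |y i - x i| + |x i - u i| := abs_sub_le _ _ _
    have h4 : |y i - x i| = |x i - y i| := abs_sub_comm _ _
    linarith
  have hfu : f u = 0 := by simp [hfdef]
  have hedge : ∀ {a b : Fin d → ℤ} (w : (openLattice d ω').Walk a b),
      ∀ e ∈ w.edges, e ∈ (openLattice d ω).edgeSet :=
    fun w e he => SimpleGraph.edgeSet_mono hle (w.edges_subset_edgeSet he)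
  rcases eq_or_lt_of_le (Nat.succ_le_of_lt hmn) with hn1 | hn1
  · -- n = m + 1, the boundary box is just {u}
    have hcast : ((n - m - 1 : ℕ) : ℤ) = 0 := by omega
    obtain ⟨w₂, hw₂path⟩ :=
      ((p.transfer (openLattice d ω) (hedge p)).reverse).toPath
    refine ⟨u, u, .nil, w₂, SimpleGraph.Walk.IsPath.nil, hw₂path, ?_, ?_, ?_⟩
    · intro z hz _
      left; simpa using hz
    · exact ⟨fun i => by simp [hcast], ⟨Classical.arbitrary _, by simp [hcast]⟩⟩
    · exact ⟨fun i => by simp [hcast], ⟨Classical.arbitrary _, by simp [hcast]⟩⟩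
  · -- m + 1 < n
    set R : ℤ := (n : ℤ) - m - 1 with hRdef
    have hcast : ((n - m - 1 : ℕ) : ℤ) = R := by omega
    have hR1 : 1 ≤ R := by omega
    set q₁ := p.takeUntil o ho with hq₁def
    set q₂ := p.dropUntil o ho with hq₂def
    have hspec : q₁.append q₂ = p := p.take_spec ho
    have hq₁path : q₁.IsPath := hpath.takeUntil ho
    have hq₂path : q₂.IsPath := hpath.dropUntil ho
    have hfo : R + 1 ≤ f o := by
      have h1 : |o i₀| - |u i₀| ≤ |o i₀ - u i₀| := abs_sub_abs_le_abs_sub _ _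
      have h2 := hf_ge o i₀
      have h3 := hu i₀
      linarith
    have hfv : f v ≤ R := by
      apply hf_le
      intro i
      have h1 : |u i - v i| ≤ ∑ j, |u j - v j| :=
        Finset.single_le_sum (f := fun j => |u j - v j|) (fun j _ => abs_nonneg _)
          (Finset.mem_univ i)
      have h2 : |v i - u i| = |u i - v i| := abs_sub_comm _ _
      linarith
    obtain ⟨x, w₁', w₁'', hfx, hsup₁, hsplit₁⟩ :=
      prefix_ivt hstep q₁ (by omega : f u ≤ R) (by omega : R ≤ f o)
    obtain ⟨y, w₂', w₂'', hfy, hsup₂, hsplit₂⟩ :=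
      prefix_ivt hstep q₂.reverse hfv (by omega : R ≤ f o)
    have hw₁p : w₁'.IsPath := by
      rw [hsplit₁] at hq₁path
      exact hq₁path.of_append_left
    have hw₂p : w₂'.IsPath := by
      have := hq₂path.reverse
      rw [hsplit₂] at this
      exact this.of_append_left
    have hsub₁ : w₁'.support ⊆ q₁.support := by
      rw [hsplit₁]
      exact SimpleGraph.Walk.subset_support_append_left _ _
    have hsub₂ : w₂'.support ⊆ q₂.support := by
      intro z hz
      have hz' : z ∈ q₂.reverse.support := by
        rw [hsplit₂]
        exact SimpleGraph.Walk.subset_support_append_left _ _ hz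
      rwa [SimpleGraph.Walk.support_reverse, List.mem_reverse] at hz'
    have hps : p.support = q₁.support ++ q₂.support.tail := by
      rw [← hspec, SimpleGraph.Walk.support_append]
    have hdisj : List.Disjoint q₁.support q₂.support.tail := by
      have := hpath.support_nodup
      rw [hps] at this
      exact List.disjoint_of_nodup_append this
    refine ⟨x, y,
      w₁'.transfer _ (hedge w₁'), w₂'.transfer _ (hedge w₂'),
      hw₁p.transfer _, hw₂p.transfer _, ?_, ?_, ?_⟩
    · intro z hz₁ hz₂
      exfalso
      rw [SimpleGraph.Walk.support_transfer] at hz₁ hz₂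
      have hzq₁ : z ∈ q₁.support := hsub₁ hz₁
      have hzq₂ : z ∈ q₂.support := hsub₂ hz₂
      rw [q₂.support_eq_cons, List.mem_cons] at hzq₂
      rcases hzq₂ with rfl | hzt
      · have := hsup₁ z hz₁
        omega
      · exact hdisj hzq₁ hzt
    · refine ⟨fun i => ?_, ?_⟩
      · rw [hcast, ← hfx]; exact hf_ge x i
      · obtain ⟨i, _, hi⟩ := Finset.exists_mem_eq_sup' hne0 (fun i => |x i - u i|)
        exact ⟨i, by rw [hcast, ← hfx]; exact hi.symm⟩
    · refine ⟨fun i => ?_, ?_⟩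
      · rw [hcast, ← hfy]; exact hf_ge y i
      · obtain ⟨i, _, hi⟩ := Finset.exists_mem_eq_sup' hne0 (fun i => |y i - u i|)
        exact ⟨i, by rw [hcast, ← hfy]; exact hi.symm⟩
end

section
/- For a bond b in B(n−⌈√n⌉) ⊂ Z^d, the event G_n(b) ∩ G(b)^c implies the event D(b, ⌈√n⌉): there exist two disjoint open paths from the two endpoints of b reaching the boundary of the box v_1(b) + B(⌈√n⌉ − 1). -/
open MeasureTheory ENNReal Filter


namespace StmtAux

variable {V : Type*} {G H : SimpleGraph V} {u v : V}

lemma getVert_mem_support' (p : G.Walk u v) (i : ℕ) : p.getVert i ∈ p.support := by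
  induction p generalizing i with
  | nil => simp [SimpleGraph.Walk.getVert]
  | cons h q ih =>
    cases i with
    | zero => simp [SimpleGraph.Walk.getVert_zero]
    | succ j => rw [SimpleGraph.Walk.getVert_cons_succ]; simp [ih j]

lemma exists_getVert_of_mem_support (p : G.Walk u v) {z : V} (hz : z ∈ p.support) :
    ∃ j, j ≤ p.length ∧ p.getVert j = z := by
  induction p with
  | nil => exact ⟨0, le_refl _, by simpa using (List.mem_singleton.mp (by simpa using hz)).symm⟩
  | cons h q ih =>
    rw [SimpleGraph.Walk.support_cons, List.mem_cons] at hz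
    rcases hz with rfl | hz
    · exact ⟨0, Nat.zero_le _, SimpleGraph.Walk.getVert_zero _⟩
    · obtain ⟨j, hj, hje⟩ := ih hz
      exact ⟨j + 1, by simpa using Nat.succ_le_succ hj, by
        rwa [SimpleGraph.Walk.getVert_cons_succ]⟩

lemma IsPath.getVert_inj {p : G.Walk u v} (hp : p.IsPath) {i j : ℕ}
    (hi : i ≤ p.length) (hj : j ≤ p.length) (h : p.getVert i = p.getVert j) : i = j := by
  induction p generalizing i j with
  | nil => simp only [SimpleGraph.Walk.length_nil, Nat.le_zero] at hi hj; omega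
  | cons hadj q ih =>
    rw [SimpleGraph.Walk.cons_isPath_iff] at hp
    cases i with
    | zero =>
      cases j with
      | zero => rfl
      | succ j' =>
        exfalso
        rw [SimpleGraph.Walk.getVert_zero, SimpleGraph.Walk.getVert_cons_succ] at h
        exact hp.2 (h ▸ getVert_mem_support' q j')
    | succ i' =>
      cases j with
      | zero =>
        exfalso
        rw [SimpleGraph.Walk.getVert_zero, SimpleGraph.Walk.getVert_cons_succ] at h
        exact hp.2 (h ▸ getVert_mem_support' q i')
      | succ j' =>
        rw [SimpleGraph.Walk.length_cons] at hi hj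
        rw [SimpleGraph.Walk.getVert_cons_succ, SimpleGraph.Walk.getVert_cons_succ] at h
        have := ih hp.1 (Nat.le_of_succ_le_succ hi) (Nat.le_of_succ_le_succ hj) h
        omega

lemma exists_segment (p : G.Walk u v) (a b : ℕ) (hab : a ≤ b) (hb : b ≤ p.length) :
    ∃ w : G.Walk (p.getVert a) (p.getVert b),
      ∀ z ∈ w.support, ∃ j, a ≤ j ∧ j ≤ b ∧ p.getVert j = z := by
  induction b, hab using Nat.le_induction with
  | base =>
    refine ⟨SimpleGraph.Walk.nil, fun z hz => ⟨a, le_rfl, le_rfl, ?_⟩⟩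
    simpa using (List.mem_singleton.mp (by simpa using hz)).symm
  | succ b hab ih =>
    obtain ⟨w, hw⟩ := ih (by omega)
    refine ⟨w.concat (p.adj_getVert_succ (by omega)), fun z hz => ?_⟩
    rw [SimpleGraph.Walk.support_concat, List.mem_append] at hz
    rcases hz with hz | hz
    · obtain ⟨j, h1, h2, h3⟩ := hw z hz
      exact ⟨j, h1, by omega, h3⟩
    · exact ⟨b + 1, by omega, le_rfl, (List.mem_singleton.mp hz).symm⟩

end StmtAux

namespace StmtAux2

lemma adj_coord {d : ℕ} {ω : Sym2 (Fin d → ℤ) → Bool} {x y : Fin d → ℤ}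
    (h : (openLattice d ω).Adj x y) (i : Fin d) : |x i - y i| ≤ 1 := by
  rw [openLattice, SimpleGraph.fromRel_adj] at h
  obtain ⟨-, h | h⟩ := h
  · calc |x i - y i| ≤ ∑ j, |x j - y j| :=
        Finset.single_le_sum (f := fun j => |x j - y j|) (fun j _ => abs_nonneg _)
          (Finset.mem_univ i)
      _ = 1 := h.1
  · rw [abs_sub_comm]
    calc |y i - x i| ≤ ∑ j, |y j - x j| :=
        Finset.single_le_sum (f := fun j => |y j - x j|) (fun j _ => abs_nonneg _)
          (Finset.mem_univ i)
      _ = 1 := h.1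

lemma box_adj {d n : ℕ} {ω : Sym2 (Fin d → ℤ) → Bool} {x y : Fin d → ℤ}
    (h : (openLattice d ω).Adj x y) (hx : ∀ i, |x i| ≤ (n : ℤ)) (hy : ∀ i, |y i| ≤ (n : ℤ)) :
    (openLatticeBox d n ω).Adj x y := by
  rw [openLattice, SimpleGraph.fromRel_adj] at h
  rw [openLatticeBox, SimpleGraph.fromRel_adj]
  obtain ⟨hne, h | h⟩ := h
  · exact ⟨hne, Or.inl ⟨h.1, h.2, hx, hy⟩⟩
  · exact ⟨hne, Or.inr ⟨h.1, h.2, hy, hx⟩⟩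

lemma openLattice_update_le (d : ℕ) (ω : Sym2 (Fin d → ℤ) → Bool) (s : Sym2 (Fin d → ℤ)) :
    openLattice d (Function.update ω s false) ≤ openLattice d ω := by
  intro x y h
  have key : ∀ t, Function.update ω s false t = true → ω t = true := by
    intro t ht
    by_cases hts : t = s
    · subst hts; simp at ht
    · rwa [Function.update_of_ne hts] at ht
  rw [openLattice, SimpleGraph.fromRel_adj] at h ⊢
  obtain ⟨hne, h | h⟩ := h
  · exact ⟨hne, Or.inl ⟨h.1, key _ h.2⟩⟩
  · exact ⟨hne, Or.inr ⟨h.1, key _ h.2⟩⟩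

end StmtAux2

/-- For a bond b = {u,v} with endpoints in B(n − ⌈√n⌉), the event G_n(b) ∩ G(b)ᶜ implies
the event D(b, ⌈√n⌉): there are two vertex-disjoint open paths from u and from v, each
reaching the boundary of the box u + B(⌈√n⌉ − 1). -/
theorem stmt_17 {d n : ℕ} (hn : 1 ≤ n) (ω : Sym2 (Fin d → ℤ) → Bool)
    (u v : Fin d → ℤ) (hbond : (∑ i, |u i - v i|) = 1)
    (hu : ∀ i, |u i| ≤ (n : ℤ) - (⌈Real.sqrt n⌉₊ : ℤ))
    (hv : ∀ i, |v i| ≤ (n : ℤ) - (⌈Real.sqrt n⌉₊ : ℤ))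
    (hGn : ω ∈ GboxEvent d n u v) (hG : ω ∉ GfullEvent d u v) :
    ∃ (x y : Fin d → ℤ) (w₁ : (openLattice d ω).Walk u x) (w₂ : (openLattice d ω).Walk v y),
      w₁.IsPath ∧ w₂.IsPath ∧
      w₁.support.Disjoint w₂.support ∧
      ((∀ i, |x i - u i| ≤ (⌈Real.sqrt n⌉₊ : ℤ) - 1) ∧ ∃ i, |x i - u i| = (⌈Real.sqrt n⌉₊ : ℤ) - 1) ∧
      ((∀ i, |y i - u i| ≤ (⌈Real.sqrt n⌉₊ : ℤ) - 1) ∧ ∃ i, |y i - u i| = (⌈Real.sqrt n⌉₊ : ℤ) - 1) := by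
  classical
  set m : ℕ := ⌈Real.sqrt (n : ℝ)⌉₊ with hm_def
  rcases Nat.lt_or_ge n 2 with hn2 | hn2
  · -- n = 1 : hypotheses are contradictory
    exfalso
    have hn1 : n = 1 := by omega
    subst hn1
    have hm1 : m = 1 := by
      rw [hm_def]; norm_num
    have hsum : (∑ i, |u i - v i|) = 0 := by
      refine Finset.sum_eq_zero fun i _ => ?_
      have h1 := hu i
      have h2 := hv i
      rw [hm1] at h1 h2
      have hu0 : u i = 0 := abs_nonpos_iff.mp (by push_cast at h1 ⊢; linarith)
      have hv0 : v i = 0 := abs_nonpos_iff.mp (by push_cast at h2 ⊢; linarith)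
      simp [hu0, hv0]
    rw [hsum] at hbond; exact absurd hbond (by norm_num)
  · -- main case : n ≥ 2, so m ≥ 2
    have hm2 : 2 ≤ m := by
      have h1 : (1 : ℝ) < Real.sqrt n := by
        have := Real.sqrt_lt_sqrt (by norm_num : (0:ℝ) ≤ 1) (by exact_mod_cast hn2 : (1:ℝ) < n)
        rwa [Real.sqrt_one] at this
      have : 1 < m := by rw [hm_def, Nat.lt_ceil]; exact_mod_cast h1
      omega
    have hm2' : (2 : ℤ) ≤ (m : ℤ) := by exact_mod_cast hm2
    -- the full-lattice path avoiding the bond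
    have hreach : (openLattice d (Function.update ω s(u, v) false)).Reachable u v := by
      by_contra hc; exact hG hc
    obtain ⟨w0⟩ := hreach
    set p := w0.bypass with hp_def
    have hp : p.IsPath := w0.bypass_isPath
    -- the path must exit B(n)
    have hexout : ∃ z ∈ p.support, ∃ i, (n : ℤ) < |z i| := by
      by_contra hcon
      push_neg at hcon
      exact hGn ⟨p.transfer (openLatticeBox d n (Function.update ω s(u, v) false)) (by
        intro e he
        induction e using Sym2.ind with
        | _ x y =>
          exact (SimpleGraph.mem_edgeSet _).mpr (StmtAux2.box_adj (p.adj_of_mem_edges he)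
            (hcon x (p.fst_mem_support_of_mem_edges he))
            (hcon y (p.snd_mem_support_of_mem_edges he))))⟩
    obtain ⟨z₀, hz₀s, i₀, hz₀⟩ := hexout
    obtain ⟨e, hek, hez⟩ := StmtAux.exists_getVert_of_mem_support p hz₀s
    have hMe : (m : ℤ) + 1 ≤ |p.getVert e i₀ - u i₀| := by
      rw [hez]
      have h1 := hu i₀
      have h2 : |z₀ i₀| ≤ |z₀ i₀ - u i₀| + |u i₀| := by
        calc |z₀ i₀| = |(z₀ i₀ - u i₀) + u i₀| := by ring_nf
          _ ≤ _ := abs_add_le _ _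
      linarith
    -- first and last "boundary-reaching" indices
    have hBe : ∃ i, (m : ℤ) - 1 ≤ |p.getVert e i - u i| := ⟨i₀, by linarith⟩
    have hex : ∃ j, ∃ i, (m : ℤ) - 1 ≤ |p.getVert j i - u i| := ⟨e, hBe⟩
    set a := Nat.find hex with ha_def
    have hBa := Nat.find_spec hex
    have hae : a ≤ e := Nat.find_min' hex hBe
    have hak : a ≤ p.length := le_trans hae hek
    have hex' : ∃ j, ∃ i, (m : ℤ) - 1 ≤ |p.getVert (p.length - j) i - u i| :=
      ⟨p.length - e, by rwa [Nat.sub_sub_self hek]⟩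
    set b := p.length - Nat.find hex' with hb_def
    have hBb : ∃ i, (m : ℤ) - 1 ≤ |p.getVert b i - u i| := Nat.find_spec hex'
    have hbk : b ≤ p.length := Nat.sub_le _ _
    have hmax : ∀ j, b < j → j ≤ p.length → ¬ ∃ i, (m : ℤ) - 1 ≤ |p.getVert j i - u i| := by
      intro j h1 h2 hB
      have hlt : p.length - j < Nat.find hex' := by omega
      exact Nat.find_min hex' hlt (by rw [Nat.sub_sub_self h2]; exact hB)
    have heb : e ≤ b := by
      by_contra h
      exact hmax e (by omega) hek hBe
    -- coordinate change along a step
    have hstep : ∀ j, j < p.length → ∀ i, |p.getVert (j+1) i - p.getVert j i| ≤ 1 := by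
      intro j hj i
      have := StmtAux2.adj_coord (p.adj_getVert_succ hj) i
      rwa [abs_sub_comm] at this
    -- bounds at a
    have hxa_le : ∀ i, |p.getVert a i - u i| ≤ (m : ℤ) - 1 := by
      intro i
      rcases Nat.eq_zero_or_pos a with h0 | hpos
      · rw [h0, p.getVert_zero]
        simp only [sub_self, abs_zero]
        linarith
      · obtain ⟨j, hj⟩ : ∃ j, a = j + 1 := ⟨a - 1, by omega⟩
        have hnb := Nat.find_min hex (show j < a by omega)
        push_neg at hnb
        have h1 := hnb i
        have h2 := hstep j (by omega) i
        have h3 := abs_sub_le (p.getVert (j+1) i) (p.getVert j i) (u i)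
        rw [hj]
        linarith
    have hxa_eq : ∃ i, |p.getVert a i - u i| = (m : ℤ) - 1 := by
      obtain ⟨i, hi⟩ := hBa
      exact ⟨i, le_antisymm (hxa_le i) hi⟩
    -- bounds at b
    have hyb_le : ∀ i, |p.getVert b i - u i| ≤ (m : ℤ) - 1 := by
      intro i
      rcases eq_or_lt_of_le hbk with hbke | hblt
      · rw [hbke, p.getVert_length]
        have h1 : |v i - u i| ≤ 1 := by
          have := Finset.single_le_sum (f := fun j => |u j - v j|) (fun j _ => abs_nonneg _)
            (Finset.mem_univ i)
          rw [hbond] at this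
          rw [abs_sub_comm]; exact this
        linarith
      · have hnb := hmax (b+1) (by omega) (by omega)
        push_neg at hnb
        have h1 := hnb i
        have h2 := hstep b hblt i
        have h3 := abs_sub_le (p.getVert b i) (p.getVert (b+1) i) (u i)
        have h4 : |p.getVert b i - p.getVert (b+1) i| ≤ 1 := by rwa [abs_sub_comm]
        linarith
    have hyb_eq : ∃ i, |p.getVert b i - u i| = (m : ℤ) - 1 := by
      obtain ⟨i, hi⟩ := hBb
      exact ⟨i, le_antisymm (hyb_le i) hi⟩
    -- a < b
    have hab : a < b := by
      have h1 : a ≠ e := by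
        rintro rfl
        have := hxa_le i₀
        linarith
      have h2 : e ≠ b := by
        rintro rfl
        have := hyb_le i₀
        linarith
      omega
    -- build the two walks
    obtain ⟨w1, hw1⟩ := StmtAux.exists_segment p 0 a (Nat.zero_le _) hak
    obtain ⟨w2, hw2⟩ := StmtAux.exists_segment p b p.length hbk le_rfl
    have hle := StmtAux2.openLattice_update_le d ω s(u, v)
    have htr : ∀ {s t : Fin d → ℤ}
        (w : (openLattice d (Function.update ω s(u, v) false)).Walk s t),
        ∀ e ∈ w.edges, e ∈ (openLattice d ω).edgeSet :=
      fun w e he => SimpleGraph.edgeSet_mono hle (w.edges_subset_edgeSet he)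
    let W1 : (openLattice d ω).Walk u (p.getVert a) :=
      ((w1.copy (p.getVert_zero) rfl).transfer (openLattice d ω) (htr _))
    let W2 : (openLattice d ω).Walk v (p.getVert b) :=
      (((w2.copy rfl (p.getVert_length)).reverse).transfer (openLattice d ω) (htr _))
    have hW1sub : ∀ z ∈ W1.bypass.support, ∃ j, j ≤ a ∧ p.getVert j = z := by
      intro z hz
      have h := SimpleGraph.Walk.support_bypass_subset _ hz
      rw [SimpleGraph.Walk.support_transfer, SimpleGraph.Walk.support_copy] at h
      obtain ⟨j, _, hja, hjz⟩ := hw1 z h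
      exact ⟨j, hja, hjz⟩
    have hW2sub : ∀ z ∈ W2.bypass.support, ∃ j, b ≤ j ∧ j ≤ p.length ∧ p.getVert j = z := by
      intro z hz
      have h := SimpleGraph.Walk.support_bypass_subset _ hz
      rw [SimpleGraph.Walk.support_transfer, SimpleGraph.Walk.support_reverse,
        List.mem_reverse, SimpleGraph.Walk.support_copy] at h
      exact hw2 z h
    refine ⟨p.getVert a, p.getVert b, W1.bypass, W2.bypass,
      SimpleGraph.Walk.bypass_isPath _, SimpleGraph.Walk.bypass_isPath _, ?_,
      ⟨hxa_le, hxa_eq⟩, ⟨hyb_le, hyb_eq⟩⟩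
    intro z hz1 hz2
    obtain ⟨j1, hj1a, hj1⟩ := hW1sub z hz1
    obtain ⟨j2, hbj2, hj2k, hj2⟩ := hW2sub z hz2
    have := StmtAux.IsPath.getVert_inj hp (le_trans hj1a hak) hj2k (hj1.trans hj2.symm)
    omega
end
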